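/- Let A, B, C be three non-collinear points in the Euclidean plane, with incenter I and excenter E_A opposite A. Then the four points B, C, I, E_A are concyclic, i.e., they lie on a common circle. -/

import Mathlib

open EuclideanGeometry

/-- The incenter of the triangle `A B C`. -/
noncomputable def incenterPt (A B C : EuclideanSpace ℝ (Fin 2)) : EuclideanSpace ℝ (Fin 2) :=
  (dist B C + dist C A + dist A B)⁻¹ •
    (dist B C • A + dist C A • B + dist A B • C)

/-- The excenter of the triangle `A B C` opposite the first vertex `A`. -/
noncomputable def excenterPt (A B C : EuclideanSpace ℝ (Fin 2)) : EuclideanSpace ℝ (Fin 2) :=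
  (-dist B C + dist C A + dist A B)⁻¹ •
    ((-dist B C) • A + dist C A • B + dist A B • C)

private lemma dist_mid_aux {V : Type*} [NormedAddCommGroup V] [InnerProductSpace ℝ V]
    (P X Y : V) (h : inner ℝ (P - X) (P - Y) = (0 : ℝ)) :
    dist P (midpoint ℝ X Y) = dist X (midpoint ℝ X Y) := by
  have h1 : P - midpoint ℝ X Y = (2 : ℝ)⁻¹ • ((P - X) + (P - Y)) := by
    rw [midpoint_eq_smul_add, invOf_eq_inv]; module
  have h2 : X - midpoint ℝ X Y = (2 : ℝ)⁻¹ • ((P - Y) - (P - X)) := by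
    rw [midpoint_eq_smul_add, invOf_eq_inv]; module
  rw [dist_eq_norm, dist_eq_norm, h1, h2, norm_smul, norm_smul]
  congr 1
  have e1 := norm_add_sq_real (P - X) (P - Y)
  have e2 := norm_sub_sq_real (P - Y) (P - X)
  rw [real_inner_comm] at e2
  nlinarith [norm_nonneg ((P - X) + (P - Y)), norm_nonneg ((P - Y) - (P - X))]

/-- The points `B`, `C`, the incenter `I` and the excenter `E_A` opposite `A`
are concyclic. -/
theorem incenter_excenter_concyclic (A B C : EuclideanSpace ℝ (Fin 2))
    (h : AffineIndependent ℝ ![A, B, C]) :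
    EuclideanGeometry.Concyclic
      ({B, C, incenterPt A B C, excenterPt A B C} : Set (EuclideanSpace ℝ (Fin 2))) := by
  set a := dist B C with ha
  set b := dist C A with hb
  set c := dist A B with hc
  have hnc : ¬ Collinear ℝ ({A, B, C} : Set (EuclideanSpace ℝ (Fin 2))) :=
    affineIndependent_iff_not_collinear_set.mp h
  have hAB : A ≠ B := by rintro rfl; exact hnc (by simp [Set.insert_comm, collinear_pair])
  have hCA : C ≠ A := by rintro rfl; exact hnc (by simp [Set.insert_comm, collinear_pair])
  have hbpos : 0 < b := dist_pos.mpr hCA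
  have hcpos : 0 < c := dist_pos.mpr hAB
  have hapos : 0 ≤ a := dist_nonneg
  have htri : a < c + b := by
    rcases lt_or_eq_of_le (dist_triangle B A C) with h' | h'
    · simpa [ha, hb, hc, dist_comm] using h'
    · exact absurd (dist_add_dist_eq_iff.mp h'.symm).collinear
        (by simpa [Set.insert_comm] using hnc)
  have hs : a + b + c ≠ 0 := by positivity
  have ht : -a + b + c ≠ 0 := by intro h0; nlinarith
  set I := incenterPt A B C with hI
  set E := excenterPt A B C with hE
  have keyBI : (a + b + c) • (B - I) = a • (B - A) + c • (B - C) := by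
    rw [hI]; simp only [incenterPt, ← ha, ← hb, ← hc]
    rw [smul_sub, smul_smul, mul_inv_cancel₀ hs, one_smul]; module
  have hBI : B - I = (a + b + c)⁻¹ • (a • (B - A) + c • (B - C)) := by
    rw [← keyBI, smul_smul, inv_mul_cancel₀ hs, one_smul]
  have keyBE : (-a + b + c) • (B - E) = (-a) • (B - A) + c • (B - C) := by
    rw [hE]; simp only [excenterPt, ← ha, ← hb, ← hc]
    rw [smul_sub, smul_smul, mul_inv_cancel₀ ht, one_smul]; module
  have hBE : B - E = (-a + b + c)⁻¹ • ((-a) • (B - A) + c • (B - C)) := by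
    rw [← keyBE, smul_smul, inv_mul_cancel₀ ht, one_smul]
  have keyCI : (a + b + c) • (C - I) = a • (C - A) + b • (C - B) := by
    rw [hI]; simp only [incenterPt, ← ha, ← hb, ← hc]
    rw [smul_sub, smul_smul, mul_inv_cancel₀ hs, one_smul]; module
  have hCI : C - I = (a + b + c)⁻¹ • (a • (C - A) + b • (C - B)) := by
    rw [← keyCI, smul_smul, inv_mul_cancel₀ hs, one_smul]
  have keyCE : (-a + b + c) • (C - E) = (-a) • (C - A) + b • (C - B) := by
    rw [hE]; simp only [excenterPt, ← ha, ← hb, ← hc]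
    rw [smul_sub, smul_smul, mul_inv_cancel₀ ht, one_smul]; module
  have hCE : C - E = (-a + b + c)⁻¹ • ((-a) • (C - A) + b • (C - B)) := by
    rw [← keyCE, smul_smul, inv_mul_cancel₀ ht, one_smul]
  have hnBA : ‖B - A‖ = c := by rw [hc, dist_eq_norm, norm_sub_rev]
  have hnBC : ‖B - C‖ = a := by rw [ha, dist_eq_norm]
  have hnCA : ‖C - A‖ = b := by rw [hb, dist_eq_norm, norm_sub_rev]
  have hnCB : ‖C - B‖ = a := by rw [ha, dist_eq_norm, norm_sub_rev]
  have hinnB : inner ℝ (B - I) (B - E) = (0 : ℝ) := by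
    rw [hBI, hBE]
    simp only [real_inner_smul_left, real_inner_smul_right, inner_add_left, inner_add_right,
      neg_smul, inner_neg_left, inner_neg_right, real_inner_self_eq_norm_sq]
    rw [hnBA, hnBC, real_inner_comm (B - C) (B - A)]
    ring
  have hinnC : inner ℝ (C - I) (C - E) = (0 : ℝ) := by
    rw [hCI, hCE]
    simp only [real_inner_smul_left, real_inner_smul_right, inner_add_left, inner_add_right,
      neg_smul, inner_neg_left, inner_neg_right, real_inner_self_eq_norm_sq]
    rw [hnCA, hnCB, real_inner_comm (C - B) (C - A)]
    ring
  constructor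
  · refine ⟨midpoint ℝ I E, dist I (midpoint ℝ I E), ?_⟩
    rintro p (rfl | rfl | rfl | rfl)
    · exact dist_mid_aux _ _ _ hinnB
    · exact dist_mid_aux _ _ _ hinnC
    · rfl
    · rw [dist_left_midpoint, dist_right_midpoint, dist_comm I E]
  · unfold Coplanar
    refine (Submodule.rank_le _).trans_eq ?_
    have : Module.rank ℝ (EuclideanSpace ℝ (Fin 2)) =
        Module.finrank ℝ (EuclideanSpace ℝ (Fin 2)) := (Module.finrank_eq_rank _ _).symm
    rw [this, finrank_euclideanSpace]; simp
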